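/- For every integer n ≥ 2, the 4×4 matrix G_n = [[1,1,-n,-1],[0,1,-1,0],[0,0,1,0],[0,-1,0,1]] satisfies det(I - t·G_n) = (1-t)⁴, and the (1,3)-entry of G_n·(I - t·G_n)^{-1} equals (-n + (2n-1)t - n·t²)/(1-t)⁴. -/

import Mathlib

set_option synthInstance.maxHeartbeats 1000000
set_option maxHeartbeats 4000000

open Matrix

/-- The monodromy matrix of the twist knot 𝒦_{2n-1}, over ℚ(t). -/
noncomputable def twistMonodromy (n : ℕ) : Matrix (Fin 4) (Fin 4) (RatFunc ℚ) :=
  !![1, 1, -(n : RatFunc ℚ), -1; 0, 1, -1, 0; 0, 0, 1, 0; 0, -1, 0, 1]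

lemma one_sub_X_ne_zero : (1 - RatFunc.X : RatFunc ℚ) ≠ 0 := by
  rw [sub_ne_zero]
  intro h
  have h2 : (1 : Polynomial ℚ) = Polynomial.X := by
    apply IsFractionRing.injective (Polynomial ℚ) (RatFunc ℚ)
    simpa [RatFunc.algebraMap_X] using h
  have := congrArg (Polynomial.eval 0) h2
  simp at this

lemma twist_inv (n : ℕ) :
    (1 - (RatFunc.X : RatFunc ℚ) • twistMonodromy n)⁻¹ =
      (let t : RatFunc ℚ := RatFunc.X; let s : RatFunc ℚ := 1 - t;
      !![s⁻¹, t / s ^ 3, (-t ^ 2 - n * t * s ^ 2) / s ^ 4, -t / s ^ 2;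
         0, s⁻¹, -t / s ^ 2, 0;
         0, 0, s⁻¹, 0;
         0, -t / s ^ 2, t ^ 2 / s ^ 3, s⁻¹]) := by
  have hs := one_sub_X_ne_zero
  apply inv_eq_right_inv
  show _ * _ = (1 : Matrix (Fin 4) (Fin 4) (RatFunc ℚ))
  simp only [twistMonodromy, smul_eq_mul]
  ext i j
  fin_cases i <;> fin_cases j <;>
    · simp [Matrix.mul_apply, Fin.sum_univ_four, Matrix.one_apply, Matrix.sub_apply,
        Matrix.smul_apply, smul_eq_mul, Matrix.vecHead, Matrix.vecTail]
      try field_simp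
      try ring

/-- For every `n ≥ 2`, `det (I - t G_n) = (1-t)⁴`, and the `(1,3)`-entry of
`G_n (I - t G_n)⁻¹` equals `(-n + (2n-1)t - n t²)/(1-t)⁴` (the Novikov torsion
of the twist knot 𝒦_{2n-1}). -/
theorem twist_det_and_torsion (n : ℕ) (hn : 2 ≤ n) :
    (1 - (RatFunc.X : RatFunc ℚ) • twistMonodromy n).det =
      (1 - RatFunc.X) ^ 4 ∧
    ((twistMonodromy n * (1 - (RatFunc.X : RatFunc ℚ) • twistMonodromy n)⁻¹ :
        Matrix (Fin 4) (Fin 4) (RatFunc ℚ))) 0 2 =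
      (-(n : RatFunc ℚ) + (2 * (n : RatFunc ℚ) - 1) * RatFunc.X
          - (n : RatFunc ℚ) * RatFunc.X ^ 2) / (1 - RatFunc.X) ^ 4 := by
  have hs := one_sub_X_ne_zero
  constructor
  · simp [Matrix.det_succ_row_zero, Fin.sum_univ_succ, twistMonodromy, Matrix.sub_apply,
      Matrix.smul_apply, smul_eq_mul, Matrix.one_apply, Matrix.vecHead, Matrix.vecTail,
      Fin.succ_ne_zero, show (Fin.succ 2 : Fin 4) = 3 from rfl,
      show (Fin.succ 1 : Fin 3).succ = 3 from rfl]
    ring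
  · rw [twist_inv]
    simp [twistMonodromy, Matrix.mul_apply, Fin.sum_univ_four, Matrix.vecHead, Matrix.vecTail]
    obtain ⟨s, hsdef⟩ : ∃ s : RatFunc ℚ, s = 1 - RatFunc.X := ⟨_, rfl⟩
    rw [← hsdef]
    have hs' : s ≠ 0 := hsdef ▸ hs
    field_simp
    rw [hsdef]
    ring
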